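/- Let m, l, k be natural numbers and let x₁ ≤ x₂ ≤ ⋯ ≤ x_l ≤ x < y ≤ z₁ ≤ z₂ ≤ ⋯ ≤ z_k be letters of [m] (the lists x₁,…,x_l and z₁,…,z_k may be empty). Then the word x₁ x₂ ⋯ x_l y z₁ z₂ ⋯ z_k x is Knuth equivalent to the word y x₁ x₂ ⋯ x_l x z₁ z₂ ⋯ z_k. (This realizes one loading step of the box-ball carrier by elementary Knuth transformations.) -/

import Mathlib

/-- An elementary Knuth transformation applied to three consecutive letters of a word:
`y z x ↦ y x z` when `x < y ≤ z`, and `x z y ↦ z x y` when `x ≤ y < z`. -/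
inductive KnuthStep {α : Type*} [LinearOrder α] : List α → List α → Prop
  | k1 (p s : List α) (x y z : α) (h1 : x < y) (h2 : y ≤ z) :
      KnuthStep (p ++ y :: z :: x :: s) (p ++ y :: x :: z :: s)
  | k2 (p s : List α) (x y z : α) (h1 : x ≤ y) (h2 : y < z) :
      KnuthStep (p ++ x :: z :: y :: s) (p ++ z :: x :: y :: s)

/-- Knuth equivalence: the equivalence relation generated by the elementary Knuth
transformations (finitely many transformations and their inverses). -/
def KnuthEquiv {α : Type*} [LinearOrder α] : List α → List α → Prop :=
  Relation.EqvGen KnuthStep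

/-- for letters `x₁ ≤ ⋯ ≤ x_l ≤ x < y ≤ z₁ ≤ ⋯ ≤ z_k` of `[m]`, the word
`x₁⋯x_l y z₁⋯z_k x` is Knuth equivalent to `y x₁⋯x_l x z₁⋯z_k`
(one loading step of the box-ball carrier). -/
lemma KnuthStep.append_left {α : Type*} [LinearOrder α] {u v : List α} (c : List α)
    (h : KnuthStep u v) : KnuthStep (c ++ u) (c ++ v) := by
  cases h with
  | k1 p s x y z h1 h2 =>
      rw [← List.append_assoc, ← List.append_assoc]
      exact KnuthStep.k1 (c ++ p) s x y z h1 h2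
  | k2 p s x y z h1 h2 =>
      rw [← List.append_assoc, ← List.append_assoc]
      exact KnuthStep.k2 (c ++ p) s x y z h1 h2

lemma KnuthEquiv.append_left {α : Type*} [LinearOrder α] {u v : List α} (c : List α)
    (h : KnuthEquiv u v) : KnuthEquiv (c ++ u) (c ++ v) := by
  induction h with
  | rel a b hab => exact Relation.EqvGen.rel _ _ (hab.append_left c)
  | refl a => exact Relation.EqvGen.refl _
  | symm a b _ ih => exact Relation.EqvGen.symm _ _ ih
  | trans a b d _ _ ih1 ih2 => exact Relation.EqvGen.trans _ _ _ ih1 ih2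

lemma knuth_A {α : Type*} [LinearOrder α] (x y : α) (zs : List α)
    (hxy : x < y) (hzs : zs.Pairwise (· ≤ ·)) (hyzs : ∀ b ∈ zs, y ≤ b) :
    KnuthEquiv (y :: (zs ++ [x])) (y :: x :: zs) := by
  induction zs generalizing y with
  | nil => exact Relation.EqvGen.refl _
  | cons z zs' ih =>
      have hz : y ≤ z := hyzs z (by simp)
      have h1 : KnuthEquiv (z :: (zs' ++ [x])) (z :: x :: zs') :=
        ih z (lt_of_lt_of_le hxy hz) hzs.of_cons
          (fun b hb => (List.pairwise_cons.mp hzs).1 b hb)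
      have h2 : KnuthEquiv (y :: z :: (zs' ++ [x])) (y :: z :: x :: zs') := by
        have := h1.append_left [y]
        simpa using this
      refine Relation.EqvGen.trans _ _ _ h2 ?_
      exact Relation.EqvGen.rel _ _ (KnuthStep.k1 [] zs' x y z hxy hz)

lemma knuth_B {α : Type*} [LinearOrder α] (x y : α) (xs rest : List α)
    (hxy : x < y) (hxs : xs.Pairwise (· ≤ ·)) (hxsx : ∀ a ∈ xs, a ≤ x) :
    KnuthEquiv (xs ++ y :: x :: rest) (y :: (xs ++ x :: rest)) := by
  induction xs with
  | nil => exact Relation.EqvGen.refl _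
  | cons a xs' ih =>
      have hax : a ≤ x := hxsx a (by simp)
      have h1 : KnuthEquiv (xs' ++ y :: x :: rest) (y :: (xs' ++ x :: rest)) :=
        ih hxs.of_cons (fun b hb => hxsx b (by simp [hb]))
      have h2 : KnuthEquiv (a :: (xs' ++ y :: x :: rest)) (a :: y :: (xs' ++ x :: rest)) := by
        have := h1.append_left [a]
        simpa using this
      refine Relation.EqvGen.trans _ _ _ h2 ?_
      cases xs' with
      | nil =>
          exact Relation.EqvGen.rel _ _ (KnuthStep.k2 [] rest a x y hax hxy)
      | cons b xs'' =>
          have hab : a ≤ b := (List.pairwise_cons.mp hxs).1 b (by simp)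
          have hby : b < y := lt_of_le_of_lt (hxsx b (by simp)) hxy
          exact Relation.EqvGen.rel _ _
            (KnuthStep.k2 [] (xs'' ++ x :: rest) a b y hab hby)

theorem stmt_0 (m l k : ℕ) (xs zs : List (Fin m))
    (hl : xs.length = l) (hk : zs.length = k)
    (x y : Fin m)
    (hxs : xs.Pairwise (· ≤ ·)) (hzs : zs.Pairwise (· ≤ ·))
    (hxsx : ∀ a ∈ xs, a ≤ x) (hxy : x < y) (hyzs : ∀ b ∈ zs, y ≤ b) :
    KnuthEquiv (xs ++ y :: (zs ++ [x])) (y :: (xs ++ x :: zs)) := by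
  have hA : KnuthEquiv (xs ++ y :: (zs ++ [x])) (xs ++ y :: x :: zs) :=
    (knuth_A x y zs hxy hzs hyzs).append_left xs
  exact Relation.EqvGen.trans _ _ _ hA (knuth_B x y xs zs hxy hxs hxsx)
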